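/- For any symmetric positive definite matrix M ∈ ℝ^{n×n} with n ≥ 2, the largest eigenvalue satisfies λ_max(M)² ≤ trace(M²)/n + √((n−1)/n · (trace(M⁴) − trace(M²)²/n)). -/

import Mathlib

open Matrix Finset

lemma trace_pow_eq_sum {n : ℕ} (M : Matrix (Fin n) (Fin n) ℝ) (hM : M.IsHermitian) (k : ℕ) :
    (M ^ k).trace = ∑ i, hM.eigenvalues i ^ k := by
  have hU : star (hM.eigenvectorUnitary : Matrix (Fin n) (Fin n) ℝ) *
      (hM.eigenvectorUnitary : Matrix (Fin n) (Fin n) ℝ) = 1 :=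
    Unitary.coe_star_mul_self hM.eigenvectorUnitary
  have hU' : (hM.eigenvectorUnitary : Matrix (Fin n) (Fin n) ℝ) *
      star (hM.eigenvectorUnitary : Matrix (Fin n) (Fin n) ℝ) = 1 :=
    Unitary.coe_mul_star_self hM.eigenvectorUnitary
  have key : ∀ j : ℕ, ((hM.eigenvectorUnitary : Matrix (Fin n) (Fin n) ℝ) *
      (Matrix.diagonal (RCLike.ofReal ∘ hM.eigenvalues)) *
      star (hM.eigenvectorUnitary : Matrix (Fin n) (Fin n) ℝ)) ^ j =
      (hM.eigenvectorUnitary : Matrix (Fin n) (Fin n) ℝ) *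
      (Matrix.diagonal (RCLike.ofReal ∘ hM.eigenvalues)) ^ j *
      star (hM.eigenvectorUnitary : Matrix (Fin n) (Fin n) ℝ) := by
    intro j
    induction j with
    | zero => simp [hU']
    | succ m ih =>
        rw [pow_succ, ih, pow_succ]
        simp only [mul_assoc]
        rw [← mul_assoc (star (hM.eigenvectorUnitary : Matrix (Fin n) (Fin n) ℝ)), hU, one_mul]
  conv_lhs => rw [hM.spectral_theorem, Unitary.conjStarAlgAut_apply]
  rw [key, Matrix.trace_mul_comm, ← mul_assoc, hU, one_mul, Matrix.diagonal_pow,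
    Matrix.trace_diagonal]
  simp

lemma samuelson_bound {n : ℕ} (hn : 2 ≤ n) (x : Fin n → ℝ) (j : Fin n) :
    x j ≤ (∑ i, x i) / n +
      Real.sqrt (((n : ℝ) - 1) / n * (∑ i, x i ^ 2 - (∑ i, x i) ^ 2 / n)) := by
  have hn0 : (0 : ℝ) < n := by positivity
  set S := ∑ i, x i with hS
  set Q := ∑ i, x i ^ 2 with hQ
  have h1 : ∑ i ∈ univ.erase j, x i = S - x j := Finset.sum_erase_eq_sub (mem_univ j)
  have h2 : ∑ i ∈ univ.erase j, x i ^ 2 = Q - x j ^ 2 :=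
    Finset.sum_erase_eq_sub (mem_univ j)
  have h3 : (#(univ.erase j) : ℝ) = (n : ℝ) - 1 := by
    rw [Finset.card_erase_of_mem (mem_univ j), Finset.card_univ, Fintype.card_fin,
      Nat.cast_sub (le_trans one_le_two hn), Nat.cast_one]
  have hcs : (S - x j) ^ 2 ≤ ((n : ℝ) - 1) * (Q - x j ^ 2) := by
    have h := sq_sum_le_card_mul_sum_sq (s := univ.erase j) (f := x)
    rw [h1, h2, h3] at h
    exact h
  have hnum : ((n : ℝ) * x j - S) ^ 2 ≤ ((n : ℝ) - 1) * ((n : ℝ) * Q - S ^ 2) := by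
    nlinarith [mul_le_mul_of_nonneg_left hcs hn0.le]
  have hA : (x j - S / n) ^ 2 ≤ ((n : ℝ) - 1) / n * (Q - S ^ 2 / n) := by
    have e1 : (x j - S / n) ^ 2 = ((n : ℝ) * x j - S) ^ 2 / n ^ 2 := by
      field_simp
    have e2 : ((n : ℝ) - 1) / n * (Q - S ^ 2 / n) =
        ((n : ℝ) - 1) * ((n : ℝ) * Q - S ^ 2) / n ^ 2 := by
      field_simp
    rw [e1, e2]
    gcongr
  have hsq : x j - S / n ≤ Real.sqrt (((n : ℝ) - 1) / n * (Q - S ^ 2 / n)) := by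
    calc x j - S / n ≤ |x j - S / n| := le_abs_self _
    _ = Real.sqrt ((x j - S / n) ^ 2) := (Real.sqrt_sq_eq_abs _).symm
    _ ≤ _ := Real.sqrt_le_sqrt hA
  linarith

theorem lam_max_sq_trace_bound (n : ℕ) (hn : 2 ≤ n)
    (M : Matrix (Fin n) (Fin n) ℝ) (hM : M.PosDef) :
    (⨆ i, hM.1.eigenvalues i) ^ 2 ≤
      (M ^ 2).trace / n +
        Real.sqrt (((n : ℝ) - 1) / n * ((M ^ 4).trace - (M ^ 2).trace ^ 2 / n)) := by
  have hne : Nonempty (Fin n) := ⟨⟨0, by omega⟩⟩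
  obtain ⟨j, hj⟩ := Finite.exists_max hM.1.eigenvalues
  have hsup : (⨆ i, hM.1.eigenvalues i) = hM.1.eigenvalues j :=
    le_antisymm (ciSup_le hj) (le_ciSup (Set.Finite.bddAbove (Set.finite_range _)) j)
  have h2 : (M ^ 2).trace = ∑ i, hM.1.eigenvalues i ^ 2 := trace_pow_eq_sum M hM.1 2
  have h4 : (M ^ 4).trace = ∑ i, (hM.1.eigenvalues i ^ 2) ^ 2 := by
    rw [trace_pow_eq_sum M hM.1 4]
    exact Finset.sum_congr rfl fun i _ => by ring
  rw [hsup, h2, h4]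
  exact samuelson_bound hn (fun i => hM.1.eigenvalues i ^ 2) j
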